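/- Let L = F_{2^l} with l > 3, q = 2^k, gcd(k,l) = 1, and let I_j = {b ∈ L : x^{q+1} + x + b has exactly j roots in L}. Then for every d ∈ L^× (if l is odd), respectively every d ∈ L^× that is not a (q+1)-th power (if l is even), the sets d·I_3 and I_1 ∪ I_2 ∪ I_3 intersect nontrivially. -/

import Mathlib

open Finset
namespace DI3Aux
set_option linter.unusedSectionVars false
set_option maxHeartbeats 1000000
variable {L : Type} [Field L] [Fintype L] [DecidableEq L]

def ph (q : ℕ) (x : L) : L := x ^ (q + 1) + x

def cnt [Fintype L] [DecidableEq L] (q : ℕ) (b : L) : ℕ :=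
  (univ.filter fun x : L => ph q x = b).card

lemma hsub (htwo : (2:L) = 0) {a b : L} (h : a + b = 0) : a = b := by
  linear_combination h - b * htwo

lemma add_eq_zero_iff' (htwo : (2:L) = 0) {a b : L} : a + b = 0 ↔ a = b := by
  constructor
  · exact hsub htwo
  · intro h; rw [h]; linear_combination b * htwo


lemma pow_mul_fix {x : L} {a : ℕ} (h : x ^ 2 ^ a = x) : ∀ m, x ^ 2 ^ (a * m) = x := by
  intro m
  induction m with
  | zero => simp
  | succ n ih =>
      have h2 : 2 ^ (a * (n + 1)) = 2 ^ (a * n) * 2 ^ a := by rw [Nat.mul_succ, pow_add]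
      rw [h2, pow_mul, ih, h]

lemma gcd_fix {x : L} : ∀ a b : ℕ, 0 < a → x ^ 2 ^ a = x → x ^ 2 ^ b = x →
    x ^ 2 ^ (Nat.gcd a b) = x := by
  intro a
  induction a using Nat.strong_induction_on with
  | _ a IH =>
    intro b ha hxa hxb
    have hmod : x ^ 2 ^ (b % a) = x := by
      have hdm : a * (b / a) + b % a = b := Nat.div_add_mod b a
      have hh : x ^ 2 ^ b = x ^ 2 ^ (b % a) := by
        conv_lhs => rw [← hdm]
        rw [pow_add, pow_mul, pow_mul_fix hxa]
      rw [← hh, hxb]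
    rcases Nat.eq_zero_or_pos (b % a) with h0 | hpos
    · rw [Nat.gcd_rec, h0, Nat.gcd_zero_left]; exact hxa
    · rw [Nat.gcd_rec]
      exact IH (b % a) (Nat.mod_lt _ ha) a hpos hmod hxa

lemma sq_fix (htwo : (2:L) = 0) {x : L} (h : x ^ 2 = x) : x = 0 ∨ x = 1 := by
  have hx : x * (x + 1) = 0 := by linear_combination h + x * htwo
  rcases mul_eq_zero.mp hx with h0 | h1
  · exact Or.inl h0
  · exact Or.inr (by linear_combination h1 - htwo)

lemma ext3 {α : Type*} [DecidableEq α] {s : Finset α} (h : 3 ≤ s.card) :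
    ∃ a ∈ s, ∃ b ∈ s, ∃ c ∈ s, a ≠ b ∧ a ≠ c ∧ b ≠ c := by
  obtain ⟨t, hts, ht⟩ := Finset.exists_subset_card_eq h
  obtain ⟨a, b, c, hab, hac, hbc, rfl⟩ := Finset.card_eq_three.mp ht
  exact ⟨a, hts (by simp), b, hts (by simp), c, hts (by simp), hab, hac, hbc⟩

lemma ext4 {α : Type*} [DecidableEq α] {s : Finset α} (h : 4 ≤ s.card) :
    ∃ a ∈ s, ∃ b ∈ s, ∃ c ∈ s, ∃ e ∈ s,
      a ≠ b ∧ a ≠ c ∧ a ≠ e ∧ b ≠ c ∧ b ≠ e ∧ c ≠ e := by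
  obtain ⟨t, hts, ht⟩ := Finset.exists_subset_card_eq h
  obtain ⟨a, t3, hat, rfl, ht3⟩ := Finset.card_eq_succ.mp ht
  obtain ⟨b, c, e, hbc, hbe, hce, rfl⟩ := Finset.card_eq_three.mp ht3
  simp only [mem_insert, mem_singleton] at hat
  push_neg at hat
  exact ⟨a, hts (by simp), b, hts (by simp), c, hts (by simp), e, hts (by simp),
    hat.1, hat.2.1, hat.2.2, hbc, hbe, hce⟩

lemma ext5 {α : Type*} [DecidableEq α] {s : Finset α} (h : 5 ≤ s.card) :
    ∃ a ∈ s, ∃ b ∈ s, ∃ c ∈ s, ∃ e ∈ s, ∃ f ∈ s,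
      a ≠ b ∧ a ≠ c ∧ a ≠ e ∧ a ≠ f ∧ b ≠ c ∧ b ≠ e ∧ b ≠ f ∧ c ≠ e ∧ c ≠ f ∧ e ≠ f := by
  obtain ⟨t, hts, ht⟩ := Finset.exists_subset_card_eq h
  obtain ⟨a, t4, hat, rfl, ht4⟩ := Finset.card_eq_succ.mp ht
  obtain ⟨b, t3, hbt, rfl, ht3⟩ := Finset.card_eq_succ.mp ht4
  obtain ⟨c, e, f, hce, hcf, hef, rfl⟩ := Finset.card_eq_three.mp ht3
  simp only [mem_insert, mem_singleton] at hat hbt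
  push_neg at hat hbt
  exact ⟨a, hts (by simp), b, hts (by simp), c, hts (by simp), e, hts (by simp), f, hts (by simp),
    hat.1, hat.2.1, hat.2.2.1, hat.2.2.2, hbt.1, hbt.2.1, hbt.2.2, hce, hcf, hef⟩

lemma ph_zero (q : ℕ) (htwo : (2:L) = 0) (hone : ∀ x : L, x ^ q = 1 → x = 1) :
    ∀ x : L, ph q x = 0 ↔ x = 0 ∨ x = 1 := by
  intro x
  constructor
  · intro h
    by_cases hx : x = 0
    · exact Or.inl hx
    · right
      have h1 : (x ^ q + 1) * x = 0 := by unfold ph at h; linear_combination h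
      rcases mul_eq_zero.mp h1 with h2 | h2
      · exact hone x (by linear_combination h2 - htwo)
      · exact absurd h2 hx
  · rintro (rfl | rfl)
    · simp [ph, zero_pow (by omega : q + 1 ≠ 0)]
    · unfold ph; rw [one_pow]; linear_combination htwo

lemma cnt_zero (q : ℕ) (htwo : (2:L) = 0) (hone : ∀ x : L, x ^ q = 1 → x = 1) :
    cnt q (0:L) = 2 := by
  have hset : (univ.filter fun x : L => ph q x = 0) = {0, 1} := by
    ext x
    simp only [mem_filter, mem_univ, true_and, mem_insert, mem_singleton]
    exact ph_zero q htwo hone x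
  rw [cnt, hset, Finset.card_pair (zero_ne_one)]

lemma ph_root_ne_zero (q : ℕ) {b x : L} (hb : b ≠ 0) (hx : ph q x = b) : x ≠ 0 := by
  intro h0
  apply hb
  rw [← hx, h0]
  simp [ph, zero_pow (by omega : q + 1 ≠ 0)]

lemma cnt_le_three (q : ℕ) (htwo : (2:L) = 0)
    (hF : ∀ a b : L, (a + b) ^ q = a ^ q + b ^ q)
    (hfix : ∀ x : L, x ^ q = x → x = 0 ∨ x = 1)
    (hone : ∀ x : L, x ^ q = 1 → x = 1) :
    ∀ b : L, cnt q b ≤ 3 := by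
  intro b
  by_contra hgt
  push_neg at hgt
  unfold cnt at hgt
  obtain ⟨x1, hx1, x2, hx2, x3, hx3, x4, hx4, h12, h13, h14, h23, h24, h34⟩ :=
    ext4 (by omega : 4 ≤ (univ.filter fun x : L => ph q x = b).card)
  simp only [mem_filter, mem_univ, true_and] at hx1 hx2 hx3 hx4
  by_cases hb : b = 0
  · subst hb
    rcases (ph_zero q htwo hone x1).mp hx1 with h1 | h1 <;>
    rcases (ph_zero q htwo hone x2).mp hx2 with h2 | h2 <;>
    rcases (ph_zero q htwo hone x3).mp hx3 with h3 | h3 <;>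
      simp_all
  · have hz1 := ph_root_ne_zero q hb hx1
    have hz2 := ph_root_ne_zero q hb hx2
    have hz3 := ph_root_ne_zero q hb hx3
    have hz4 := ph_root_ne_zero q hb hx4
    have h1 : x1 ^ q * x1 = b + x1 := by unfold ph at hx1; linear_combination hx1 - x1 * htwo
    have h2 : x2 ^ q * x2 = b + x2 := by unfold ph at hx2; linear_combination hx2 - x2 * htwo
    have h3 : x3 ^ q * x3 = b + x3 := by unfold ph at hx3; linear_combination hx3 - x3 * htwo
    have h4 : x4 ^ q * x4 = b + x4 := by unfold ph at hx4; linear_combination hx4 - x4 * htwo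
    have hcross : (x1^q + x3^q)*(x2^q + x4^q)*(x1*x2*x3*x4)*((x1+x4)*(x2+x3))
        = (x1^q + x4^q)*(x2^q + x3^q)*(x1*x2*x3*x4)*((x1+x3)*(x2+x4)) := by
      linear_combination (-(x2^q*x1*x2*x3*x4^2) + x2^q*x1*x2*x3^2*x4 + x2^q*x2^2*x3*x4^2 - x2^q*x2^2*x3^2*x4
          - x3^q*x1*x2*x3*x4^2 - x3^q*x1*x2^2*x3*x4 - x3^q*x2*x3^2*x4^2 - x3^q*x2^2*x3^2*x4
          + x4^q*x1*x2*x3^2*x4 + x4^q*x1*x2^2*x3*x4 + x4^q*x2*x3^2*x4^2 + x4^q*x2^2*x3*x4^2) * h1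
        + (x3^q*x1*x2*x3*x4^2 + x3^q*x1*x3^2*x4^2 + x3^q*x1^2*x2*x3*x4 + x3^q*x1^2*x3^2*x4
          - x4^q*x1*x2*x3^2*x4 - x4^q*x1*x3^2*x4^2 - x4^q*x1^2*x2*x3*x4 - x4^q*x1^2*x3*x4^2
          - b*x1*x3*x4^2 + b*x1*x3^2*x4 + b*x2*x3*x4^2 - b*x2*x3^2*x4
          + x1*x2*x3*x4^2 - x1*x2*x3^2*x4 - x1^2*x3*x4^2 + x1^2*x3^2*x4) * h2
        + (-(x4^q*x1*x2^2*x3*x4) + x4^q*x1*x2^2*x4^2 + x4^q*x1^2*x2*x3*x4 - x4^q*x1^2*x2*x4^2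
          - b*x1*x2^2*x4 + b*x1*x3*x4^2 + b*x1^2*x2*x4 + b*x1^2*x3*x4 - b*x2*x3*x4^2 - b*x2^2*x3*x4
          - x1*x2^2*x3*x4 + x1*x2^2*x4^2 + x1^2*x2*x3*x4 - x1^2*x2*x4^2) * h3
        + (b*x1*x2^2*x4 - b*x1*x3^2*x4 - b*x1^2*x2*x4 - b*x1^2*x3*x4 + b*x2*x3^2*x4 + b*x2^2*x3*x4
          + 2*x1*x2^2*x3*x4 - 2*x1*x2^2*x3^2 - 2*x1^2*x2*x3*x4 + 2*x1^2*x2*x3^2) * h4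
        + (-(b*x1*x2^2*x3^2) + b*x1*x2^2*x4^2 + b*x1^2*x2*x3^2 - b*x1^2*x2*x4^2 - b*x1^2*x3*x4^2
          + b*x1^2*x3^2*x4 + b*x2^2*x3*x4^2 - b*x2^2*x3^2*x4
          + 2*x1*x2^2*x3*x4^2 - 2*x1*x2^2*x3^2*x4 - 2*x1^2*x2*x3*x4^2 + 2*x1^2*x2*x3^2*x4) * htwo
    have hne : ∀ {a c : L}, a ≠ c → a + c ≠ 0 := fun hac h0 => hac (hsub htwo h0)
    have hX : x1*x2*x3*x4 ≠ 0 := by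
      simp only [mul_ne_zero_iff]; exact ⟨⟨⟨hz1, hz2⟩, hz3⟩, hz4⟩
    set N := (x1+x3)*(x2+x4) with hNdef
    set D := (x1+x4)*(x2+x3) with hDdef
    have hN0 : N ≠ 0 := mul_ne_zero (hne h13) (hne h24)
    have hD0 : D ≠ 0 := mul_ne_zero (hne h14) (hne h23)
    have hNq : N ^ q = (x1^q + x3^q)*(x2^q + x4^q) := by rw [hNdef, mul_pow, hF, hF]
    have hDq : D ^ q = (x1^q + x4^q)*(x2^q + x3^q) := by rw [hDdef, mul_pow, hF, hF]
    have hND : N ^ q * D = D ^ q * N := by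
      have h' : (x1*x2*x3*x4) * (N ^ q * D) = (x1*x2*x3*x4) * (D ^ q * N) := by
        rw [hNq, hDq]; linear_combination hcross
      exact mul_left_cancel₀ hX h'
    have hr : (N / D) ^ q = N / D := by
      rw [div_pow, div_eq_div_iff (pow_ne_zero q hD0) hD0]
      linear_combination hND
    rcases hfix _ hr with h0 | hone1
    · rcases mul_eq_zero.mp ((div_eq_zero_iff.mp h0).resolve_right hD0) with hc | hc
      · exact hne h13 hc
      · exact hne h24 hc
    · have hND1 : N = D := by
        field_simp at hone1; exact hone1
      have hfin : (x1+x2)*(x3+x4) = 0 := by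
        rw [hNdef, hDdef] at hND1
        linear_combination (x1*x4 + x2*x3) * htwo - hND1
      rcases mul_eq_zero.mp hfin with hc | hc
      · exact hne h12 hc
      · exact hne h34 hc

lemma exists_third (q : ℕ) (htwo : (2:L) = 0)
    (hF : ∀ a b : L, (a + b) ^ q = a ^ q + b ^ q)
    (hsurjw : ∀ s : L, s ≠ 0 → ∃ w : L, w ≠ 0 ∧ w ^ q = s * w)
    {b x1 x2 : L} (hb : b ≠ 0) (h12 : x1 ≠ x2)
    (hx1 : ph q x1 = b) (hx2 : ph q x2 = b) :
    ∃ x3 : L, x3 ≠ x1 ∧ x3 ≠ x2 ∧ ph q x3 = b := by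
  have hz1 := ph_root_ne_zero q hb hx1
  have hz2 := ph_root_ne_zero q hb hx2
  obtain ⟨w, hw0, hwq⟩ := hsurjw (x2 / x1) (div_ne_zero hz2 hz1)
  have hw3 : w ^ q * x1 = x2 * w := by
    rw [hwq]; field_simp
  have hw1 : w ≠ 1 := by
    intro h; subst h
    apply h12
    simpa using hw3
  have hwa : w + 1 ≠ 0 := fun h => hw1 (hsub htwo h)
  have hwqa : w ^ q + 1 ≠ 0 := by
    have : (w + 1) ^ q = w ^ q + 1 := by rw [hF, one_pow]
    rw [← this]
    exact pow_ne_zero _ hwa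
  have h1 : x1 ^ q * x1 = b + x1 := by unfold ph at hx1; linear_combination hx1 - x1 * htwo
  have h2 : x2 ^ q * x2 = b + x2 := by unfold ph at hx2; linear_combination hx2 - x2 * htwo
  set x3 := (x2 * w + x1) / (w + 1) with hx3def
  have hG : (x1*x2) * ((x2^q*w^q + x1^q)*(x2*w+x1) + (x2*w+x1)*(w^q+1) + b*((w^q+1)*(w+1))) = 0 := by
    linear_combination (w*x2^2 + x1*x2) * h1
      + (w^q*w*x1*x2 + w^q*x1^2) * h2
      + (2*b*w*x2 + b*x1 + b*x2 + 2*w*x2^2 + 2*x1*x2) * hw3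
      + (b*w*x1*x2 + b*w*x2^2 + b*w^2*x2^2 + b*x1*x2 + 2*w*x1*x2^2 + w^2*x2^3 + x1^2*x2) * htwo
  have hx3q : x3 ^ q = (x2^q*w^q + x1^q) / (w^q + 1) := by
    rw [hx3def, div_pow]
    congr 1
    · rw [hF, mul_pow]
    · rw [hF, one_pow]
  have hexp : (x3 ^ q * x3 + x3 + b) * ((w^q+1)*(w+1))
      = (x2^q*w^q + x1^q)*(x2*w+x1) + (x2*w+x1)*(w^q+1) + b*((w^q+1)*(w+1)) := by
    rw [hx3q, hx3def]
    field_simp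
  have hzero : x3 ^ q * x3 + x3 + b = 0 := by
    have h0 : (x2^q*w^q + x1^q)*(x2*w+x1) + (x2*w+x1)*(w^q+1) + b*((w^q+1)*(w+1)) = 0 := by
      have hG' : (x1*x2) * ((x2^q*w^q + x1^q)*(x2*w+x1) + (x2*w+x1)*(w^q+1) + b*((w^q+1)*(w+1)))
          = (x1*x2) * 0 := by rw [mul_zero]; exact hG
      exact mul_left_cancel₀ (mul_ne_zero hz1 hz2) hG'
    rw [h0] at hexp
    exact (mul_eq_zero.mp hexp).resolve_right (mul_ne_zero hwqa hwa)
  have hroot : ph q x3 = b := by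
    unfold ph; linear_combination hzero - b * htwo
  refine ⟨x3, ?_, ?_, hroot⟩
  · intro h
    have h' : x2 * w + x1 = x1 * (w + 1) := by
      rw [hx3def] at h
      exact (div_eq_iff hwa).mp h
    have : (x2 + x1) * w = 0 := by linear_combination h' + x1 * w * htwo
    rcases mul_eq_zero.mp this with hc | hc
    · exact h12 (hsub htwo hc).symm
    · exact hw0 hc
  · intro h
    have h' : x2 * w + x1 = x2 * (w + 1) := by
      rw [hx3def] at h
      exact (div_eq_iff hwa).mp h
    have hx12 : x1 = x2 := by linear_combination h'
    exact h12 hx12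

lemma cnt_ne_two (q : ℕ) (htwo : (2:L) = 0)
    (hF : ∀ a b : L, (a + b) ^ q = a ^ q + b ^ q)
    (hsurjw : ∀ s : L, s ≠ 0 → ∃ w : L, w ≠ 0 ∧ w ^ q = s * w)
    {b : L} (hb : b ≠ 0) : cnt q b ≠ 2 := by
  intro h2
  unfold cnt at h2
  obtain ⟨x1, x2, h12, hset⟩ := Finset.card_eq_two.mp h2
  have hx1 : ph q x1 = b := by
    have : x1 ∈ univ.filter fun x : L => ph q x = b := by rw [hset]; simp
    exact (mem_filter.mp this).2
  have hx2 : ph q x2 = b := by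
    have : x2 ∈ univ.filter fun x : L => ph q x = b := by rw [hset]; simp
    exact (mem_filter.mp this).2
  obtain ⟨x3, h31, h32, hx3⟩ := exists_third q htwo hF hsurjw hb h12 hx1 hx2
  have : x3 ∈ univ.filter fun x : L => ph q x = b := by simp [hx3]
  rw [hset] at this
  simp only [mem_insert, mem_singleton] at this
  rcases this with h | h
  · exact h31 h
  · exact h32 h

def ee (q : ℕ) (y : L) : L := (y + y^q) / (y + (y^q)^q)

def BB (q : ℕ) (y : L) : L :=
  ((y + y^q) * ((y^q)^q + ((y^q)^q)^q)) / ((y + (y^q)^q) * (y^q + ((y^q)^q)^q))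

lemma triple' (q : ℕ) (hq : q ≠ 0) (htwo : (2:L) = 0)
    (hF : ∀ a b : L, (a + b) ^ q = a ^ q + b ^ q)
    (hfix : ∀ x : L, x ^ q = x → x = 0 ∨ x = 1)
    (hone : ∀ x : L, x ^ q = 1 → x = 1)
    (hinj : ∀ a b : L, a ^ q = b ^ q → a = b)
    {y Y1 Y2 Y3 : L} (hY1 : y^q = Y1) (hY2 : Y1^q = Y2) (hY3 : Y2^q = Y3)
    (hy : Y2 ≠ y) :
    3 ≤ cnt q (((y+Y1)*(Y2+Y3))/((y+Y2)*(Y1+Y3))) ∧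
    ph q ((y+Y1)/(y+Y2)) = ((y+Y1)*(Y2+Y3))/((y+Y2)*(Y1+Y3)) := by
  have hne : ∀ {a c : L}, a ≠ c → a + c ≠ 0 := fun hac h0 => hac (hsub htwo h0)
  -- basic nonvanishing
  have hy0 : y ≠ 0 := by
    rintro rfl
    apply hy
    rw [← hY2, ← hY1, zero_pow hq, zero_pow hq]
  have hy1 : y ≠ 1 := by
    rintro rfl
    apply hy
    rw [← hY2, ← hY1, one_pow, one_pow]
  have hY1y : Y1 ≠ y := by
    intro h
    apply hy
    rw [← hY2, h, hY1]
    exact h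
  have hY2Y1 : Y2 ≠ Y1 := by
    intro h
    apply hY1y
    apply hinj
    rw [hY2, h, hY1]
  have hd1 : y + Y2 ≠ 0 := hne (Ne.symm hy)
  have hd2 : Y1 + Y3 ≠ 0 := by
    have : (y + Y2)^q = Y1 + Y3 := by rw [hF, hY1, hY3]
    rw [← this]; exact pow_ne_zero _ hd1
  have hyY1 : y + Y1 ≠ 0 := hne (Ne.symm hY1y)
  have hY10 : Y1 ≠ 0 := by rw [← hY1]; exact pow_ne_zero _ hy0
  have hY20 : Y2 ≠ 0 := by rw [← hY2]; exact pow_ne_zero _ hY10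
  have hY11 : Y1 + 1 ≠ 0 := by
    intro h
    have h1 : Y1 = 1 := hsub htwo h
    exact hy1 (hone y (by rw [hY1, h1]))
  have hY21 : Y2 + 1 ≠ 0 := by
    intro h
    have h1 : Y2 = 1 := hsub htwo h
    have h2 : Y1 = 1 := hone Y1 (by rw [hY2, h1])
    exact hY11 (by rw [h2]; linear_combination htwo)
  have hY12 : Y1 + Y2 ≠ 0 := hne (Ne.symm hY2Y1)
  -- the three roots
  set P1 := y + Y1 with hP1
  set Q1 := y + Y2 with hQ1
  set P2 := (y + Y1) * Y2 with hP2
  set Q2 := (y + Y2) * Y1 with hQ2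
  set P3 := (y + Y1) * (Y2 + 1) with hP3
  set Q3 := (y + Y2) * (Y1 + 1) with hQ3
  set Bn := (y+Y1)*(Y2+Y3) with hBn
  set Bd := (y+Y2)*(Y1+Y3) with hBd
  have hQ10 : Q1 ≠ 0 := hd1
  have hQ20 : Q2 ≠ 0 := mul_ne_zero hd1 hY10
  have hQ30 : Q3 ≠ 0 := mul_ne_zero hd1 hY11
  have hBd0 : Bd ≠ 0 := mul_ne_zero hd1 hd2
  -- q-powers of roots
  have hq1 : (P1 / Q1)^q = (Y1 + Y2) / (Y1 + Y3) := by
    rw [hP1, hQ1]; simp only [div_pow, mul_pow, hF, one_pow, hY1, hY2, hY3]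
  have hq2 : (P2 / Q2)^q = ((Y1 + Y2) * Y3) / ((Y1 + Y3) * Y2) := by
    rw [hP2, hQ2]; simp only [div_pow, mul_pow, hF, one_pow, hY1, hY2, hY3]
  have hq3 : (P3 / Q3)^q = ((Y1 + Y2) * (Y3 + 1)) / ((Y1 + Y3) * (Y2 + 1)) := by
    rw [hP3, hQ3]; simp only [div_pow, mul_pow, hF, one_pow, hY1, hY2, hY3]
  have hQq1 : (Y1 + Y3 : L) ≠ 0 := hd2
  have hQq2 : ((Y1 + Y3) * Y2 : L) ≠ 0 := mul_ne_zero hd2 hY20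
  have hQq3 : ((Y1 + Y3) * (Y2 + 1) : L) ≠ 0 := mul_ne_zero hd2 hY21
  -- the key cleared identities (char 2 certificates)
  have hkey1 : (Y1+Y2)*P1*Bd + P1*(Y1+Y3)*Bd + Bn*((Y1+Y3)*Q1) = 0 := by
    rw [hP1, hQ1, hBn, hBd]
    linear_combination (3*Y1*Y2*Y3*y + Y1*Y2*Y3^2 + Y1*Y2*y^2 + Y1*Y2^2*Y3 + Y1*Y2^2*y + 2*Y1*Y3*y^2
      + Y1*Y3^2*y + 2*Y1^2*Y2*Y3 + 2*Y1^2*Y2*y + Y1^2*Y2^2 + 2*Y1^2*Y3*y + Y1^2*y^2 + Y1^3*Y2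
      + Y1^3*y + Y2*Y3*y^2 + Y2*Y3^2*y + Y2^2*Y3*y + Y3^2*y^2) * htwo
  have hkey2 : ((Y1+Y2)*Y3)*P2*Bd + P2*((Y1+Y3)*Y2)*Bd + Bn*(((Y1+Y3)*Y2)*Q2) = 0 := by
    rw [hP2, hQ2, hBn, hBd]
    linear_combination (Y1*Y2*Y3^2*y^2 + 2*Y1*Y2^2*Y3*y^2 + 2*Y1*Y2^2*Y3^2*y + 2*Y1*Y2^3*Y3*y
      + Y1*Y2^3*Y3^2 + Y1^2*Y2*Y3*y^2 + Y1^2*Y2*Y3^2*y + 3*Y1^2*Y2^2*Y3*y + Y1^2*Y2^2*Y3^2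
      + Y1^2*Y2^2*y^2 + 2*Y1^2*Y2^3*Y3 + Y1^2*Y2^3*y + Y1^3*Y2*Y3*y + Y1^3*Y2^2*Y3 + Y1^3*Y2^2*y
      + Y1^3*Y2^3 + Y2^2*Y3^2*y^2 + Y2^3*Y3^2*y) * htwo
  have hkey3 : ((Y1+Y2)*(Y3+1))*P3*Bd + P3*((Y1+Y3)*(Y2+1))*Bd + Bn*(((Y1+Y3)*(Y2+1))*Q3) = 0 := by
    rw [hP3, hQ3, hBn, hBd]
    linear_combination (3*Y1*Y2*Y3*y + 4*Y1*Y2*Y3*y^2 + Y1*Y2*Y3^2 + 3*Y1*Y2*Y3^2*y + Y1*Y2*Y3^2*y^2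
      + Y1*Y2*y^2 + Y1*Y2^2*Y3 + 5*Y1*Y2^2*Y3*y + 2*Y1*Y2^2*Y3*y^2 + 2*Y1*Y2^2*Y3^2 + 2*Y1*Y2^2*Y3^2*y
      + Y1*Y2^2*y + Y1*Y2^2*y^2 + Y1*Y2^3*Y3 + 2*Y1*Y2^3*Y3*y + Y1*Y2^3*Y3^2 + Y1*Y2^3*y + 2*Y1*Y3*y^2
      + Y1*Y3^2*y + Y1*Y3^2*y^2 + 2*Y1^2*Y2*Y3 + 5*Y1^2*Y2*Y3*y + Y1^2*Y2*Y3*y^2 + Y1^2*Y2*Y3^2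
      + Y1^2*Y2*Y3^2*y + 2*Y1^2*Y2*y + 2*Y1^2*Y2*y^2 + Y1^2*Y2^2 + 4*Y1^2*Y2^2*Y3 + 3*Y1^2*Y2^2*Y3*y
      + Y1^2*Y2^2*Y3^2 + 3*Y1^2*Y2^2*y + Y1^2*Y2^2*y^2 + Y1^2*Y2^3 + 2*Y1^2*Y2^3*Y3 + Y1^2*Y2^3*y
      + 2*Y1^2*Y3*y + Y1^2*Y3*y^2 + Y1^2*Y3^2*y + Y1^2*y^2 + Y1^3*Y2 + Y1^3*Y2*Y3 + Y1^3*Y2*Y3*y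
      + 2*Y1^3*Y2*y + 2*Y1^3*Y2^2 + Y1^3*Y2^2*Y3 + Y1^3*Y2^2*y + Y1^3*Y2^3 + Y1^3*Y3*y + Y1^3*y
      + Y2*Y3*y^2 + Y2*Y3^2*y + 2*Y2*Y3^2*y^2 + Y2^2*Y3*y + Y2^2*Y3*y^2 + 2*Y2^2*Y3^2*y
      + Y2^2*Y3^2*y^2 + Y2^3*Y3*y + Y2^3*Y3^2*y + Y3^2*y^2) * htwo
  -- each is a root
  have hroot : ∀ (Pq Qq P Q : L), Q ≠ 0 → Qq ≠ 0 → (P/Q)^q = Pq/Qq →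
      (Pq*P*Bd + P*Qq*Bd + Bn*(Qq*Q) = 0) → ph q (P/Q) = Bn/Bd := by
    intro Pq Qq P Q hQ0 hQq0 hpq hkey
    have hcalc : Pq/Qq * (P/Q) + P/Q + Bn/Bd = (Pq*P*Bd + P*Qq*Bd + Bn*(Qq*Q))/(Qq*Q*Bd) := by
      field_simp
    have hzero : Pq/Qq * (P/Q) + P/Q + Bn/Bd = 0 := by rw [hcalc, hkey, zero_div]
    have hps : ph q (P/Q) = (P/Q)^q * (P/Q) + (P/Q) := by unfold ph; ring
    rw [hps, hpq]
    exact hsub htwo hzero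
  have hr1 : ph q (P1/Q1) = Bn/Bd := hroot _ _ _ _ hQ10 hQq1 hq1 hkey1
  have hr2 : ph q (P2/Q2) = Bn/Bd := hroot _ _ _ _ hQ20 hQq2 hq2 hkey2
  have hr3 : ph q (P3/Q3) = Bn/Bd := hroot _ _ _ _ hQ30 hQq3 hq3 hkey3
  -- distinctness
  have hd12 : P1/Q1 ≠ P2/Q2 := by
    intro h
    have h' := (div_eq_div_iff hQ10 hQ20).mp h
    have hz : (y+Y1)*((y+Y2)*(Y1+Y2)) = 0 := by
      rw [hP1, hP2, hQ1, hQ2] at h'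
      linear_combination h' + (y+Y1)*(y+Y2)*Y2*htwo
    rcases mul_eq_zero.mp hz with hc | hc
    · exact hyY1 hc
    · rcases mul_eq_zero.mp hc with hc' | hc'
      · exact hd1 hc'
      · exact hY12 hc'
  have hd13 : P1/Q1 ≠ P3/Q3 := by
    intro h
    have h' := (div_eq_div_iff hQ10 hQ30).mp h
    have hz : (y+Y1)*((y+Y2)*(Y1+Y2)) = 0 := by
      rw [hP1, hP3, hQ1, hQ3] at h'
      linear_combination h' + (y+Y1)*(y+Y2)*Y2*htwo
    rcases mul_eq_zero.mp hz with hc | hc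
    · exact hyY1 hc
    · rcases mul_eq_zero.mp hc with hc' | hc'
      · exact hd1 hc'
      · exact hY12 hc'
  have hd23 : P2/Q2 ≠ P3/Q3 := by
    intro h
    have h' := (div_eq_div_iff hQ20 hQ30).mp h
    have hz : (y+Y1)*((y+Y2)*(Y1+Y2)) = 0 := by
      rw [hP2, hP3, hQ2, hQ3] at h'
      linear_combination h' + (y+Y1)*(y+Y2)*Y1*htwo
    rcases mul_eq_zero.mp hz with hc | hc
    · exact hyY1 hc
    · rcases mul_eq_zero.mp hc with hc' | hc'
      · exact hd1 hc'
      · exact hY12 hc'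
  -- conclude
  constructor
  · have hsubset : ({P1/Q1, P2/Q2, P3/Q3} : Finset L) ⊆
        univ.filter fun x : L => ph q x = Bn/Bd := by
      intro x hx
      simp only [mem_insert, mem_singleton] at hx
      rcases hx with rfl | rfl | rfl <;> simp [hr1, hr2, hr3]
    have hcard3 : ({P1/Q1, P2/Q2, P3/Q3} : Finset L).card = 3 := by
      rw [card_insert_of_notMem (by simp [hd12, hd13]),
        card_insert_of_notMem (by simp [hd23]), card_singleton]
    calc 3 = ({P1/Q1, P2/Q2, P3/Q3} : Finset L).card := hcard3.symm
      _ ≤ _ := card_le_card hsubset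
  · exact hr1

lemma triple (q : ℕ) (hq : q ≠ 0) (htwo : (2:L) = 0)
    (hF : ∀ a b : L, (a + b) ^ q = a ^ q + b ^ q)
    (hfix : ∀ x : L, x ^ q = x → x = 0 ∨ x = 1)
    (hone : ∀ x : L, x ^ q = 1 → x = 1)
    (hinj : ∀ a b : L, a ^ q = b ^ q → a = b)
    {y : L} (hy : (y^q)^q ≠ y) :
    3 ≤ cnt q (BB q y) ∧ ph q (ee q y) = BB q y := by
  have h := triple' q hq htwo hF hfix hone hinj
    (rfl : y^q = y^q) (rfl : (y^q)^q = (y^q)^q) (rfl : ((y^q)^q)^q = ((y^q)^q)^q) hy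
  constructor
  · have := h.1
    unfold BB
    convert this using 3 <;> ring
  · have := h.2
    unfold BB ee
    convert this using 2 <;> ring

lemma ee_fiber (q : ℕ) (htwo : (2:L) = 0)
    (hF : ∀ a b : L, (a + b) ^ q = a ^ q + b ^ q)
    (hfix : ∀ x : L, x ^ q = x → x = 0 ∨ x = 1)
    {y y' : L} (hy : (y^q)^q ≠ y) (hy' : (y'^q)^q ≠ y')
    (h : ee q y = ee q y') : y' = y ∨ y' = y + 1 := by
  have hne : ∀ {a c : L}, a ≠ c → a + c ≠ 0 := fun hac h0 => hac (hsub htwo h0)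
  have hu0 : y + y^q ≠ 0 := by
    intro h0
    have hyq : y = y^q := hsub htwo h0
    apply hy
    rw [← hyq, ← hyq]
  have hu0' : y' + y'^q ≠ 0 := by
    intro h0
    have hyq : y' = y'^q := hsub htwo h0
    apply hy'
    rw [← hyq, ← hyq]
  have hden : y + (y^q)^q = (y + y^q) + (y + y^q)^q := by
    rw [hF]; linear_combination - y^q * htwo
  have hden' : y' + (y'^q)^q = (y' + y'^q) + (y' + y'^q)^q := by
    rw [hF]; linear_combination - y'^q * htwo
  have hd0 : (y + y^q) + (y + y^q)^q ≠ 0 := by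
    rw [← hden]; exact hne fun hc => hy hc.symm
  have hd0' : (y' + y'^q) + (y' + y'^q)^q ≠ 0 := by
    rw [← hden']; exact hne fun hc => hy' hc.symm
  have hquot : (y + y^q)/((y + y^q) + (y + y^q)^q) = (y' + y'^q)/((y' + y'^q) + (y' + y'^q)^q) := by
    rw [← hden, ← hden']
    exact h
  have hcross := (div_eq_div_iff hd0 hd0').mp hquot
  have hcross2 : (y + y^q) * (y' + y'^q)^q = (y' + y'^q) * (y + y^q)^q := by
    linear_combination hcross
  have ht : ((y + y^q)/(y' + y'^q))^q = (y + y^q)/(y' + y'^q) := by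
    rw [div_pow, div_eq_div_iff (pow_ne_zero _ hu0') hu0']
    linear_combination - hcross2
  rcases hfix _ ht with h0 | h1
  · exact absurd (div_eq_zero_iff.mp h0).resolve_right (by simp [hu0, hu0'])
  · have huu : y + y^q = y' + y'^q := by
      rwa [div_eq_one_iff_eq hu0'] at h1
    have hyy : (y + y')^q = y + y' := by
      rw [hF]
      linear_combination - huu + (y^q - y')*htwo
    rcases hfix _ hyy with h0 | h1'
    · exact Or.inl (hsub htwo h0).symm
    · exact Or.inr (by linear_combination h1' - y*htwo)

lemma I3_card (q : ℕ) (hq : q ≠ 0) (htwo : (2:L) = 0)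
    (hF : ∀ a b : L, (a + b) ^ q = a ^ q + b ^ q)
    (hfix : ∀ x : L, x ^ q = x → x = 0 ∨ x = 1)
    (hone : ∀ x : L, x ^ q = 1 → x = 1)
    (hinj : ∀ a b : L, a ^ q = b ^ q → a = b)
    (h4 : ∀ x : L, (x^q)^q = x → x^4 = x) :
    Fintype.card L ≤ 4 + 6 * (univ.filter fun b : L => cnt q b = 3).card := by
  classical
  set S := univ.filter (fun y : L => ¬ (y^q)^q = y) with hS
  have hfixcard : (univ.filter fun y : L => (y^q)^q = y).card ≤ 4 := by
    have hsub4 : (univ.filter fun y : L => (y^q)^q = y) ⊆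
        insert 0 (insert 1 (univ.filter fun x : L => x^2 = x + 1)) := by
      intro x hx
      simp only [mem_filter, mem_univ, true_and] at hx
      have hx4 : x^4 = x := h4 x hx
      have hfactor : x * ((x+1) * (x^2+x+1)) = 0 := by
        linear_combination hx4 + (x^3 + x^2 + x)*htwo
      rcases mul_eq_zero.mp hfactor with h0 | h1
      · simp [h0]
      · rcases mul_eq_zero.mp h1 with h0 | h0
        · have hx1 : x = 1 := by linear_combination h0 - htwo
          simp [hx1]
        · have hx2 : x^2 = x + 1 := by linear_combination h0 - (x+1)*htwo
          simp only [mem_insert, mem_filter, mem_univ, true_and]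
          exact Or.inr (Or.inr hx2)
    have hPcard : (univ.filter fun x : L => x^2 = x + 1).card ≤ 2 := by
      by_contra hgt
      push_neg at hgt
      obtain ⟨a, ha, b, hb, c, hc, hab, hac, hbc⟩ :=
        ext3 (s := univ.filter fun x : L => x^2 = x + 1) (by omega)
      simp only [mem_filter, mem_univ, true_and] at ha hb hc
      have h1 : a + b = 0 ∨ a + b = 1 := sq_fix htwo (by linear_combination ha + hb + (1 + a*b)*htwo)
      have h2 : a + c = 0 ∨ a + c = 1 := sq_fix htwo (by linear_combination ha + hc + (1 + a*c)*htwo)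
      rcases h1 with h1 | h1
      · exact hab (hsub htwo h1)
      · rcases h2 with h2 | h2
        · exact hac (hsub htwo h2)
        · exact hbc (by linear_combination h1 - h2)
    have hi1 := card_insert_le (0:L) (insert 1 (univ.filter fun x : L => x^2 = x + 1))
    have hi2 := card_insert_le (1:L) (univ.filter fun x : L => x^2 = x + 1)
    have hi3 := card_le_card hsub4
    omega
  have hfib : ∀ b ∈ S.image (BB q), (S.filter fun y => BB q y = b).card ≤ 6 := by
    intro b _
    have hsubB : (S.filter fun y => BB q y = b) ⊆
        (univ.filter fun x : L => ph q x = b).biUnion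
          (fun r => S.filter fun y => ee q y = r) := by
      intro y hy'
      obtain ⟨hyS, hBBy⟩ := mem_filter.mp hy'
      have hyc : ¬ (y^q)^q = y := (mem_filter.mp hyS).2
      have htr := triple q hq htwo hF hfix hone hinj hyc
      apply mem_biUnion.mpr
      refine ⟨ee q y, ?_, ?_⟩
      · simp only [mem_filter, mem_univ, true_and]
        rw [htr.2, hBBy]
      · exact mem_filter.mpr ⟨hyS, rfl⟩
    have hbound : ∀ r ∈ (univ.filter fun x : L => ph q x = b),
        (S.filter fun y => ee q y = r).card ≤ 2 := by
      intro r _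
      rcases (S.filter fun y => ee q y = r).eq_empty_or_nonempty with he | ⟨y0, hy0⟩
      · simp [he]
      · obtain ⟨hy0S, hy0e⟩ := mem_filter.mp hy0
        have hy0c : ¬ (y0^q)^q = y0 := (mem_filter.mp hy0S).2
        have hsub2 : (S.filter fun y => ee q y = r) ⊆ {y0, y0 + 1} := by
          intro y hym
          obtain ⟨hymS, hyme⟩ := mem_filter.mp hym
          have hymc : ¬ (y^q)^q = y := (mem_filter.mp hymS).2
          have heq : ee q y0 = ee q y := by rw [hyme, hy0e]
          rcases ee_fiber q htwo hF hfix hy0c hymc heq with h' | h' <;>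
            simp [h']
        calc (S.filter fun y => ee q y = r).card ≤ ({y0, y0+1} : Finset L).card :=
              card_le_card hsub2
          _ ≤ 2 := by
              have := card_insert_le y0 ({y0+1} : Finset L)
              simpa using this
    calc (S.filter fun y => BB q y = b).card
        ≤ ((univ.filter fun x : L => ph q x = b).biUnion
            (fun r => S.filter fun y => ee q y = r)).card := card_le_card hsubB
      _ ≤ ∑ r ∈ (univ.filter fun x : L => ph q x = b),
            (S.filter fun y => ee q y = r).card := card_biUnion_le
      _ ≤ ∑ _r ∈ (univ.filter fun x : L => ph q x = b), 2 := sum_le_sum hbound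
      _ = (univ.filter fun x : L => ph q x = b).card * 2 := by
          rw [sum_const, smul_eq_mul]
      _ ≤ 6 := by
          have h3 : (univ.filter fun x : L => ph q x = b).card ≤ 3 :=
            cnt_le_three q htwo hF hfix hone b
          omega
  have hSle : S.card ≤ 6 * (S.image (BB q)).card :=
    Finset.card_le_mul_card_image S 6 hfib
  have himg : (S.image (BB q)).card ≤ (univ.filter fun b : L => cnt q b = 3).card := by
    apply card_le_card
    intro b hb
    obtain ⟨y, hyS, hby⟩ := mem_image.mp hb
    have hyc : ¬ (y^q)^q = y := (mem_filter.mp hyS).2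
    have htr := triple q hq htwo hF hfix hone hinj hyc
    simp only [mem_filter, mem_univ, true_and]
    rw [← hby]
    exact le_antisymm (cnt_le_three q htwo hF hfix hone _) htr.1
  have hpart : (univ.filter fun y : L => (y^q)^q = y).card + S.card = Fintype.card L := by
    rw [hS, ← card_univ]
    exact card_filter_add_card_filter_not _
  omega

lemma Qcount (q : ℕ) (hq : q ≠ 0) (htwo : (2:L) = 0)
    (hone : ∀ x : L, x ^ q = 1 → x = 1)
    (hinj : ∀ a b : L, a ^ q = b ^ q → a = b)
    (finv : L → L) (hfinv : ∀ a : L, (finv a)^q = a)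
    {d : L} (hd0 : d ≠ 0) (hd1 : d ≠ 1) :
    (univ.filter fun p : L × L => ph q p.2 = d * ph q p.1).card
      = 2 + (univ.filter fun v : L => ¬ (v^(q+1) = d ∨ v = d)).card := by
  classical
  have hphz : ∀ x : L, ph q x = 0 ↔ x = 0 ∨ x = 1 := ph_zero q htwo hone
  set Q := univ.filter fun p : L × L => ph q p.2 = d * ph q p.1 with hQ
  have hsplit : (Q.filter fun p => p.1 = 0).card + (Q.filter fun p => ¬ p.1 = 0).card
      = Q.card := card_filter_add_card_filter_not _
  have hz : ph q (0:L) = 0 := (hphz 0).mpr (Or.inl rfl)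
  have hpart1 : (Q.filter fun p => p.1 = 0) = {((0:L),(0:L)), ((0:L),(1:L))} := by
    ext p
    simp only [hQ, filter_filter, mem_filter, mem_univ, true_and, mem_insert,
      mem_singleton, Prod.ext_iff]
    constructor
    · rintro ⟨hph, h1⟩
      rw [h1, hz, mul_zero] at hph
      rcases (hphz p.2).mp hph with h2 | h2
      · exact Or.inl ⟨h1, h2⟩
      · exact Or.inr ⟨h1, h2⟩
    · rintro (⟨h1, h2⟩ | ⟨h1, h2⟩)
      · refine ⟨?_, h1⟩
        rw [h1, h2, hz, mul_zero]
      · refine ⟨?_, h1⟩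
        rw [h1, h2, hz, mul_zero]
        exact (hphz 1).mpr (Or.inr rfl)
  have hcard1 : (Q.filter fun p => p.1 = 0).card = 2 := by
    rw [hpart1]
    rw [Finset.card_pair (by simp [Prod.ext_iff])]
  -- the key relation for pairs with nonzero first coordinate
  have hkey : ∀ p : L × L, p ∈ Q → p.1 ≠ 0 →
      p.1^q * ((p.2*p.1⁻¹)^(q+1) + d) = (p.2*p.1⁻¹) + d := by
    intro p hp hx
    have hph : ph q p.2 = d * ph q p.1 := by
      rw [hQ] at hp; exact (mem_filter.mp hp).2
    set v := p.2 * p.1⁻¹ with hv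
    have hy : p.2 = v * p.1 := by rw [hv]; field_simp
    unfold ph at hph
    rw [hy] at hph
    have hxrel : p.1 * (p.1^q * (v^(q+1) + d) + (v + d)) = 0 := by
      linear_combination hph + (d*p.1^(q+1) + d*p.1)*htwo
    have h0 := (mul_eq_zero.mp hxrel).resolve_left hx
    linear_combination h0 - (v+d)*htwo
  have hdq1 : d^(q+1) ≠ d := by
    intro hdd
    apply hd1
    apply hone d
    have h1 : d^q * d = 1 * d := by rw [one_mul, ← pow_succ]; exact hdd
    exact mul_right_cancel₀ hd0 h1
  have hcard2 : (Q.filter fun p => ¬ p.1 = 0).card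
      = (univ.filter fun v : L => ¬ (v^(q+1) = d ∨ v = d)).card := by
    apply Finset.card_nbij' (fun p => p.2 * p.1⁻¹)
      (fun v => (finv ((v+d)/(v^(q+1)+d)), v * finv ((v+d)/(v^(q+1)+d))))
    · -- hi
      intro p hp
      obtain ⟨hpQ, hx⟩ := mem_filter.mp hp
      have hrel := hkey p hpQ hx
      set v := p.2 * p.1⁻¹ with hv
      have hvq : v^(q+1) ≠ d := by
        intro he
        have hzz : v^(q+1) + d = 0 := by rw [he]; linear_combination d*htwo
        rw [hzz, mul_zero] at hrel
        have hvd : v = d := hsub htwo hrel.symm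
        apply hdq1
        rw [← hvd] at he ⊢
        rw [he, hvd]
      have hvd : v ≠ d := by
        intro he
        have h0 : v + d = 0 := by rw [he]; linear_combination d*htwo
        rw [h0] at hrel
        rcases mul_eq_zero.mp hrel with hxq | hzz
        · exact hx ((pow_eq_zero_iff hq).mp hxq)
        · exact hvq (hsub htwo hzz)
      simp only [mem_coe, mem_filter, mem_univ, true_and]
      push_neg
      exact ⟨hvq, hvd⟩
    · -- hj
      intro v hv
      obtain ⟨-, hcond⟩ := mem_filter.mp hv
      push_neg at hcond
      obtain ⟨hvq, hvd⟩ := hcond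
      have hden : v^(q+1) + d ≠ 0 := fun h => hvq (hsub htwo h)
      have hnum : v + d ≠ 0 := fun h => hvd (hsub htwo h)
      set u := (v+d)/(v^(q+1)+d) with hu
      have hu0 : u ≠ 0 := div_ne_zero hnum hden
      have hxq : (finv u)^q = u := hfinv u
      have hx0 : finv u ≠ 0 := fun h => hu0 (by rw [← hxq, h, zero_pow hq])
      have hrel2 : (finv u)^q * (v^(q+1)+d) = v + d := by
        rw [hxq, hu]; field_simp
      have hQmem : ((finv u, v * finv u) : L × L) ∈ Q := by
        rw [hQ]
        simp only [mem_filter, mem_univ, true_and]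
        show ph q (v * finv u) = d * ph q (finv u)
        unfold ph
        linear_combination (finv u)*hrel2 + (v*(finv u) - d*(finv u)^(q+1))*htwo
      exact mem_filter.mpr ⟨hQmem, hx0⟩
    · -- left_inv
      intro p hp
      obtain ⟨hpQ, hx⟩ := mem_filter.mp hp
      have hrel := hkey p hpQ hx
      set v := p.2 * p.1⁻¹ with hv
      have hvq : v^(q+1) ≠ d := by
        intro he
        have hzz : v^(q+1) + d = 0 := by rw [he]; linear_combination d*htwo
        rw [hzz, mul_zero] at hrel
        have hvd : v = d := hsub htwo hrel.symm
        apply hdq1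
        rw [← hvd] at he ⊢
        rw [he, hvd]
      have hden : v^(q+1) + d ≠ 0 := fun h => hvq (hsub htwo h)
      have hx1q : p.1^q = (v+d)/(v^(q+1)+d) := by
        rw [eq_div_iff hden]; exact hrel
      have hfx : finv ((v+d)/(v^(q+1)+d)) = p.1 := by
        apply hinj
        rw [hfinv, hx1q]
      ext
      · exact hfx
      · show v * finv ((v+d)/(v^(q+1)+d)) = p.2
        rw [hfx, hv]
        field_simp
    · -- right_inv
      intro v hv
      obtain ⟨-, hcond⟩ := mem_filter.mp hv
      push_neg at hcond
      obtain ⟨hvq, hvd⟩ := hcond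
      have hden : v^(q+1) + d ≠ 0 := fun h => hvq (hsub htwo h)
      have hnum : v + d ≠ 0 := fun h => hvd (hsub htwo h)
      have hu0 : ((v+d)/(v^(q+1)+d) : L) ≠ 0 := div_ne_zero hnum hden
      have hx0 : finv ((v+d)/(v^(q+1)+d)) ≠ 0 := fun h => hu0 (by rw [← hfinv ((v+d)/(v^(q+1)+d)), h, zero_pow hq])
      show v * finv ((v+d)/(v^(q+1)+d)) * (finv ((v+d)/(v^(q+1)+d)))⁻¹ = v
      field_simp
  omega

end DI3Aux

open Finset DI3Aux in
/-- Let L = F_{2^l}, l > 3, q = 2^k, gcd(k,l) = 1, and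
I_j = {b ∈ L : x^{q+1}+x+b has exactly j roots in L}. For every d ∈ L^× (if l is
odd), resp. every d ∈ L^× that is not a (q+1)-th power (if l is even), the sets
d·I_3 and I_1 ∪ I_2 ∪ I_3 intersect nontrivially. -/
theorem dI3_intersects (k l : ℕ) (hk : 0 < k) (hl : 3 < l) (hgcd : Nat.gcd k l = 1)
    (L : Type) [Field L] [Fintype L] [DecidableEq L] (hcard : Fintype.card L = 2 ^ l)
    (d : L) (hd : d ≠ 0)
    (hcase : Odd l ∨ (Even l ∧ ¬∃ z : L, z ≠ 0 ∧ z ^ (2 ^ k + 1) = d)) :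
    ∃ b : L,
      (Finset.univ.filter fun x : L => x ^ (2 ^ k + 1) + x + b = 0).card = 3 ∧
      (Finset.univ.filter fun x : L => x ^ (2 ^ k + 1) + x + d * b = 0).card ∈
        ({1, 2, 3} : Set ℕ) := by
  classical
  -- characteristic 2
  have hlpos : 0 < l := by omega
  have hring2 : ringChar L = 2 := by
    have hp : (ringChar L).Prime := CharP.char_is_prime L (ringChar L)
    have hcast : ((Fintype.card L : ℕ) : L) = 0 := FiniteField.cast_card_eq_zero L
    rw [hcard] at hcast
    have hdvd : (ringChar L) ∣ 2 ^ l := by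
      have := (CharP.cast_eq_zero_iff L (ringChar L) (2 ^ l)).mp (by exact_mod_cast hcast)
      exact this
    have h2 : (ringChar L) ∣ 2 := hp.dvd_of_dvd_pow hdvd
    exact (Nat.prime_dvd_prime_iff_eq hp Nat.prime_two).mp h2
  haveI hchar : CharP L 2 := hring2 ▸ ringChar.charP L
  haveI : Fact (Nat.Prime 2) := ⟨Nat.prime_two⟩
  have htwo : (2 : L) = 0 := by
    have := CharP.cast_eq_zero L 2
    exact_mod_cast this
  -- basic facts
  have hq0 : (2 : ℕ) ^ k ≠ 0 := by positivity
  have hFadd : ∀ a b : L, (a + b) ^ (2^k) = a ^ (2^k) + b ^ (2^k) := fun a b =>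
    add_pow_char_pow ..
  have hcard_pow : ∀ x : L, x ^ (2^l) = x := fun x => by
    rw [← hcard]; exact FiniteField.pow_card x
  have hfix : ∀ x : L, x ^ (2^k) = x → x = 0 ∨ x = 1 := by
    intro x hx
    have h := gcd_fix k l hk hx (hcard_pow x)
    rw [hgcd] at h
    exact sq_fix htwo (by simpa using h)
  have hone : ∀ x : L, x ^ (2^k) = 1 → x = 1 := by
    intro x hx
    have haux : ∀ m : ℕ, x ^ (2^(k*(m+1))) = 1 := by
      intro m
      induction m with
      | zero => simpa using hx
      | succ n ih =>
          rw [show k*(n+1+1) = k*(n+1) + k by ring, pow_add, pow_mul, ih, one_pow]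
    have h1 : x ^ (2^(k*l)) = 1 := by
      have hll : k*((l-1)+1) = k*l := by
        congr 1
        omega
      rw [← hll]; exact haux (l-1)
    have h2 : x ^ (2^(l*k)) = x := pow_mul_fix (hcard_pow x) k
    rw [mul_comm l k] at h2
    rw [← h2, h1]
  have hinj : ∀ a b : L, a ^ (2^k) = b ^ (2^k) → a = b := by
    intro a b h
    have hz : (a + b) ^ (2^k) = 0 := by
      rw [hFadd, h]; linear_combination b^(2^k) * htwo
    exact hsub htwo ((pow_eq_zero_iff hq0).mp hz)
  have hsurjw : ∀ s : L, s ≠ 0 → ∃ w : L, w ≠ 0 ∧ w ^ (2^k) = s * w := by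
    have hm0 : (2:ℕ)^k - 1 ≠ 0 := by
      have : (2:ℕ)^1 ≤ 2^k := Nat.pow_le_pow_right (by norm_num) hk
      omega
    have hfinj : Function.Injective (fun w : L => w ^ (2^k - 1)) := by
      intro a b h
      simp only at h
      by_cases ha : a = 0
      · subst ha
        rw [zero_pow hm0] at h
        exact ((pow_eq_zero_iff hm0).mp h.symm).symm
      · by_cases hb : b = 0
        · subst hb
          rw [zero_pow hm0] at h
          exact absurd ((pow_eq_zero_iff hm0).mp h) ha
        · have ht : (a / b) ^ (2^k - 1) = 1 := by
            rw [div_pow, h, div_self (pow_ne_zero _ hb)]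
          have htq : (a / b) ^ (2^k) = a / b := by
            have he : (2:ℕ)^k = (2^k - 1) + 1 := by omega
            rw [he, pow_succ, ht, one_mul]
          rcases hfix _ htq with h0 | h1
          · exact absurd h0 (div_ne_zero ha hb)
          · field_simp at h1
            exact h1
    have hfsurj := Finite.injective_iff_surjective.mp hfinj
    intro s hs
    obtain ⟨w, hw⟩ := hfsurj s
    simp only at hw
    have hw0 : w ≠ 0 := by
      intro h0
      rw [h0, zero_pow hm0] at hw
      exact hs hw.symm
    refine ⟨w, hw0, ?_⟩
    have he : (2:ℕ)^k = (2^k - 1) + 1 := by omega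
    rw [he, pow_succ, hw]
  have hfrobsurj : Function.Surjective (fun x : L => x ^ (2^k)) :=
    Finite.injective_iff_surjective.mp (fun a b h => hinj a b h)
  set finv : L → L := fun a => Classical.choose (hfrobsurj a) with hfinvdef
  have hfinv : ∀ a : L, (finv a) ^ (2^k) = a := fun a => Classical.choose_spec (hfrobsurj a)
  have h4 : ∀ x : L, (x^(2^k))^(2^k) = x → x^4 = x := by
    intro x hx
    have hx' : x ^ (2^(2*k)) = x := by
      have he : (2:ℕ)^(2*k) = 2^k * 2^k := by rw [two_mul, pow_add]
      rw [he, pow_mul]; exact hx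
    have hg := gcd_fix (2*k) l (by omega) hx' (hcard_pow x)
    have hg2 : Nat.gcd (2*k) l ∣ 2 := by
      have h1 : Nat.gcd (2*k) l ∣ 2*k := Nat.gcd_dvd_left _ _
      have h2 : Nat.gcd (2*k) l ∣ 2*l := Dvd.dvd.mul_left (Nat.gcd_dvd_right _ _) 2
      have h3 : Nat.gcd (2*k) l ∣ Nat.gcd (2*k) (2*l) := Nat.dvd_gcd h1 h2
      rwa [Nat.gcd_mul_left, hgcd, mul_one] at h3
    rcases (Nat.dvd_prime Nat.prime_two).mp hg2 with hg1 | hg1 <;> rw [hg1] at hg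
    · rw [pow_one] at hg
      calc x^4 = (x^2)^2 := by ring
        _ = x := by rw [hg, hg]
    · norm_num at hg
      exact hg
  -- translate the goal counts
  have hcnt_eq : ∀ b : L, (Finset.univ.filter fun x : L => x ^ (2^k+1) + x + b = 0).card
      = cnt (2^k) b := by
    intro b
    unfold cnt
    congr 1
    apply Finset.filter_congr
    intro x _
    show (x ^ (2^k+1) + x + b = 0) ↔ (ph (2^k) x = b)
    unfold ph
    exact add_eq_zero_iff' htwo
  have hle3 := cnt_le_three (2^k) htwo hFadd hfix hone
  have hI3card := I3_card (2^k) hq0 htwo hFadd hfix hone hinj h4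
  have h16 : 16 ≤ 2^l := by
    calc (16:ℕ) = 2^4 := by norm_num
      _ ≤ 2^l := Nat.pow_le_pow_right (by norm_num) (by omega)
  rw [hcard] at hI3card
  -- case d = 1
  by_cases hd1 : d = 1
  · have hpos : 0 < (univ.filter fun b : L => cnt (2^k) b = 3).card := by omega
    obtain ⟨b, hb⟩ := card_pos.mp hpos
    have hb3 : cnt (2^k) b = 3 := (mem_filter.mp hb).2
    refine ⟨b, ?_, ?_⟩
    · rw [hcnt_eq]; exact hb3
    · rw [hcnt_eq, hd1, one_mul, hb3]
      simp
  -- main case : contradiction argument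
  by_contra hgoal
  push_neg at hgoal
  have hfail : ∀ b : L, cnt (2^k) b = 3 → cnt (2^k) (d*b) = 0 := by
    intro b hb3
    have h := hgoal b (by rw [hcnt_eq]; exact hb3)
    rw [hcnt_eq] at h
    simp only [Set.mem_insert_iff, Set.mem_singleton_iff] at h
    push_neg at h
    have := hle3 (d*b)
    omega
  have hcnt0 : cnt (2^k) (0:L) = 2 := cnt_zero (2^k) htwo hone
  have hne2 : ∀ b : L, b ≠ 0 → cnt (2^k) b ≠ 2 :=
    fun b hb => cnt_ne_two (2^k) htwo hFadd hsurjw hb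
  have hb2iff : ∀ b : L, cnt (2^k) b = 2 ↔ b = 0 := by
    intro b
    constructor
    · intro h; by_contra hb; exact hne2 b hb h
    · rintro rfl; exact hcnt0
  -- total sums
  have hsum_base : ∑ b : L, cnt (2^k) b = 2^l := by
    unfold cnt
    rw [← hcard, ← card_univ]
    exact (card_eq_sum_card_fiberwise (s := (univ : Finset L)) (t := univ)
      (f := ph (2^k)) (fun x _ => mem_univ _)).symm
  have hsum_d : ∑ b : L, cnt (2^k) (d*b) = 2^l := by
    rw [← hsum_base]
    exact Fintype.sum_bijective (fun b => d * b) (Equiv.mulLeft₀ d hd).bijective _ _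
      (fun x => rfl)
  -- A-count
  set A := (univ.filter fun p : L × L => ph (2^k) p.2 = d * ph (2^k) p.1).card with hAdef
  have hfiber : ∀ x : L,
      ((univ.filter fun p : L × L => ph (2^k) p.2 = d * ph (2^k) p.1).filter
        (fun p => p.1 = x)).card = cnt (2^k) (d * ph (2^k) x) := by
    intro x
    unfold cnt
    apply card_nbij' (fun p => p.2) (fun y => (x, y))
    · intro p hp
      obtain ⟨hpQ, hpx⟩ := mem_filter.mp hp
      obtain ⟨-, hrel⟩ := mem_filter.mp hpQ
      simp only [mem_coe, mem_filter, mem_univ, true_and]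
      rw [← hpx]; exact hrel
    · intro y hy
      obtain ⟨-, hrel⟩ := mem_filter.mp hy
      exact mem_filter.mpr ⟨mem_filter.mpr ⟨mem_univ _, hrel⟩, rfl⟩
    · intro p hp
      obtain ⟨-, hpx⟩ := mem_filter.mp hp
      exact Prod.ext_iff.mpr ⟨hpx.symm, rfl⟩
    · intro y _
      rfl
  have hA1 : A = ∑ x : L, cnt (2^k) (d * ph (2^k) x) := by
    rw [hAdef, card_eq_sum_card_fiberwise (f := Prod.fst) (t := univ) (fun p _ => mem_univ p.1)]
    exact sum_congr rfl (fun x _ => hfiber x)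
  -- split the x-side sum
  have hz : ph (2^k) (0:L) = 0 := (ph_zero (2^k) htwo hone 0).mpr (Or.inl rfl)
  have hz1 : ph (2^k) (1:L) = 0 := (ph_zero (2^k) htwo hone 1).mpr (Or.inr rfl)
  have hset0 : univ.filter (fun x : L => ph (2^k) x = 0) = {0, 1} := by
    ext x
    simp only [mem_filter, mem_univ, true_and, mem_insert, mem_singleton]
    exact ph_zero (2^k) htwo hone x
  have hS0 : ∑ x ∈ univ.filter (fun x : L => ph (2^k) x = 0),
      cnt (2^k) (d * ph (2^k) x) = 4 := by
    rw [hset0, sum_insert (by simp), sum_singleton, hz, hz1, mul_zero, hcnt0]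
  have hsplitx := sum_filter_add_sum_filter_not (univ : Finset L)
      (fun x : L => ph (2^k) x = 0) (fun x => cnt (2^k) (d * ph (2^k) x))
  have hsplitx2 := sum_filter_add_sum_filter_not
      (univ.filter (fun x : L => ¬ ph (2^k) x = 0))
      (fun x : L => cnt (2^k) (ph (2^k) x) = 3)
      (fun x => cnt (2^k) (d * ph (2^k) x))
  have hS3 : ∑ x ∈ (univ.filter (fun x : L => ¬ ph (2^k) x = 0)).filter
      (fun x => cnt (2^k) (ph (2^k) x) = 3), cnt (2^k) (d * ph (2^k) x) = 0 := by
    apply sum_eq_zero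
    intro x hx
    exact hfail _ (mem_filter.mp hx).2
  have hX1mem : ∀ x ∈ (univ.filter (fun x : L => ¬ ph (2^k) x = 0)).filter
      (fun x => ¬ cnt (2^k) (ph (2^k) x) = 3), cnt (2^k) (ph (2^k) x) = 1 := by
    intro x hx
    obtain ⟨hx0, h3⟩ := mem_filter.mp hx
    obtain ⟨-, hph0⟩ := mem_filter.mp hx0
    have hge1 : 0 < cnt (2^k) (ph (2^k) x) := by
      unfold cnt
      apply card_pos.mpr
      exact ⟨x, mem_filter.mpr ⟨mem_univ _, rfl⟩⟩
    have hle := hle3 (ph (2^k) x)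
    have hne := hne2 _ hph0
    omega
  have hinjX1 : ∀ x ∈ (univ.filter (fun x : L => ¬ ph (2^k) x = 0)).filter
      (fun x => ¬ cnt (2^k) (ph (2^k) x) = 3),
      ∀ y ∈ (univ.filter (fun x : L => ¬ ph (2^k) x = 0)).filter
      (fun x => ¬ cnt (2^k) (ph (2^k) x) = 3), ph (2^k) x = ph (2^k) y → x = y := by
    intro x hx y hy hxy
    have h1 := hX1mem x hx
    have hcard1 : (univ.filter fun z : L => ph (2^k) z = ph (2^k) x).card ≤ 1 := by
      unfold cnt at h1
      omega
    exact card_le_one.mp hcard1 x (by simp) y (by simp [hxy.symm])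
  have himgX1 : ((univ.filter (fun x : L => ¬ ph (2^k) x = 0)).filter
      (fun x => ¬ cnt (2^k) (ph (2^k) x) = 3)).image (ph (2^k))
      = univ.filter (fun b : L => cnt (2^k) b = 1) := by
    ext b
    constructor
    · intro hb
      obtain ⟨x, hx, rfl⟩ := mem_image.mp hb
      exact mem_filter.mpr ⟨mem_univ _, hX1mem x hx⟩
    · intro hb
      have hb1 : cnt (2^k) b = 1 := (mem_filter.mp hb).2
      have hpos : 0 < (univ.filter fun z : L => ph (2^k) z = b).card := by
        unfold cnt at hb1
        omega
      obtain ⟨x, hx⟩ := card_pos.mp hpos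
      have hphx : ph (2^k) x = b := (mem_filter.mp hx).2
      apply mem_image.mpr
      refine ⟨x, mem_filter.mpr ⟨mem_filter.mpr ⟨mem_univ _, ?_⟩, ?_⟩, hphx⟩
      · rw [hphx]
        intro hb0eq
        rw [hb0eq, hcnt0] at hb1
        omega
      · rw [hphx, hb1]
        omega
  have hSX1 : ∑ x ∈ (univ.filter (fun x : L => ¬ ph (2^k) x = 0)).filter
      (fun x => ¬ cnt (2^k) (ph (2^k) x) = 3), cnt (2^k) (d * ph (2^k) x)
      = ∑ b ∈ univ.filter (fun b : L => cnt (2^k) b = 1), cnt (2^k) (d * b) := by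
    rw [← himgX1, sum_image hinjX1]
  have hAeq : A = 4 + ∑ b ∈ univ.filter (fun b : L => cnt (2^k) b = 1),
      cnt (2^k) (d * b) := by
    rw [hS3, zero_add] at hsplitx2
    rw [hS0, ← hsplitx2, hSX1] at hsplitx
    rw [hA1, ← hsplitx]
  -- split the b-side sum
  have hsplitb := sum_filter_add_sum_filter_not (univ : Finset L)
      (fun b : L => cnt (2^k) b = 3) (fun b => cnt (2^k) (d * b))
  have hB3 : ∑ b ∈ univ.filter (fun b : L => cnt (2^k) b = 3),
      cnt (2^k) (d * b) = 0 :=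
    sum_eq_zero fun b hb => hfail b (mem_filter.mp hb).2
  have hsplitb2 := sum_filter_add_sum_filter_not
      (univ.filter (fun b : L => ¬ cnt (2^k) b = 3))
      (fun b : L => cnt (2^k) b = 1) (fun b => cnt (2^k) (d * b))
  have hI1eq : (univ.filter (fun b : L => ¬ cnt (2^k) b = 3)).filter
      (fun b => cnt (2^k) b = 1) = univ.filter (fun b : L => cnt (2^k) b = 1) := by
    rw [filter_filter]
    apply filter_congr
    intro b _
    constructor
    · rintro ⟨-, h⟩
      exact h
    · intro h
      exact ⟨by omega, h⟩
  have h0notI0 : (0:L) ∉ univ.filter (fun b : L => cnt (2^k) b = 0) := by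
    simp [hcnt0]
  have hZeq : (univ.filter (fun b : L => ¬ cnt (2^k) b = 3)).filter
      (fun b => ¬ cnt (2^k) b = 1)
      = insert (0:L) (univ.filter (fun b : L => cnt (2^k) b = 0)) := by
    ext b
    simp only [filter_filter, mem_filter, mem_univ, true_and, mem_insert]
    constructor
    · rintro ⟨h3, h1⟩
      by_cases hb0 : b = 0
      · exact Or.inl hb0
      · have := hle3 b
        have := hne2 b hb0
        right
        omega
    · rintro (rfl | h0)
      · rw [hcnt0]
        exact ⟨by omega, by omega⟩
      · exact ⟨by omega, by omega⟩
  have hZsum : ∑ b ∈ insert (0:L) (univ.filter (fun b : L => cnt (2^k) b = 0)),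
      cnt (2^k) (d * b)
      = 2 + ∑ b ∈ univ.filter (fun b : L => cnt (2^k) b = 0), cnt (2^k) (d * b) := by
    rw [sum_insert h0notI0, mul_zero, hcnt0]
  have htotal : (∑ b ∈ univ.filter (fun b : L => cnt (2^k) b = 1), cnt (2^k) (d * b))
      + (2 + ∑ b ∈ univ.filter (fun b : L => cnt (2^k) b = 0), cnt (2^k) (d * b))
      = 2^l := by
    rw [hB3, zero_add, hsum_d] at hsplitb
    rw [hI1eq, hZeq, hZsum] at hsplitb2
    rw [← hsplitb]
    exact hsplitb2
  -- exact value of A via the v-parametrization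
  have hQ := Qcount (2^k) hq0 htwo hone hinj finv hfinv hd hd1
  have hVW := card_filter_add_card_filter_not (s := (univ : Finset L))
      (p := fun v : L => v^(2^k+1) = d ∨ v = d)
  rw [card_univ, hcard] at hVW
  have hWcard : (Odd l ∧ (univ.filter (fun v : L => v^(2^k+1) = d ∨ v = d)).card = 2)
      ∨ ((univ.filter (fun v : L => v^(2^k+1) = d ∨ v = d)).card = 1 ∧ Even l) := by
    rcases hcase with hodd | ⟨heven, hno⟩
    · left
      refine ⟨hodd, ?_⟩
      have hfix2k : ∀ x : L, (x^(2^k))^(2^k) = x → x = 0 ∨ x = 1 := by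
        intro x hx
        have hx' : x ^ (2^(2*k)) = x := by
          have he : (2:ℕ)^(2*k) = 2^k * 2^k := by rw [two_mul, pow_add]
          rw [he, pow_mul]
          exact hx
        have hco : Nat.gcd (2*k) l = 1 := by
          have h2l : Nat.Coprime 2 l := Nat.coprime_two_left.mpr hodd
          exact Nat.Coprime.mul h2l hgcd
        have hg := gcd_fix (2*k) l (by omega) hx' (hcard_pow x)
        rw [hco, pow_one] at hg
        exact sq_fix htwo hg
      have hq1inj : Function.Injective (fun v : L => v^(2^k+1)) := by
        intro a b h
        simp only at h
        by_cases hb : b = 0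
        · subst hb
          rw [zero_pow (by positivity)] at h
          exact (pow_eq_zero_iff (by positivity)).mp h
        · by_cases ha : a = 0
          · subst ha
            rw [zero_pow (by positivity)] at h
            exact ((pow_eq_zero_iff (by positivity)).mp h.symm).symm
          · have ht1 : (a/b)^(2^k+1) = 1 := by
              rw [div_pow, h, div_self (pow_ne_zero _ hb)]
            have hab0 : a/b ≠ 0 := div_ne_zero ha hb
            have hqinv : (a/b)^(2^k) * (a/b) = 1 := by
              rw [← pow_succ]
              exact ht1
            have hqq : ((a/b)^(2^k))^(2^k) = a/b := by
              have hinv2 : (a/b)^(2^k) = (a/b)⁻¹ := eq_inv_of_mul_eq_one_left hqinv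
              rw [hinv2, inv_pow, hinv2, inv_inv]
            rcases hfix2k _ hqq with h0 | h1
            · exact absurd h0 hab0
            · field_simp at h1
              exact h1
      obtain ⟨v0, hv0⟩ := Finite.injective_iff_surjective.mp hq1inj d
      simp only at hv0
      have hv0d : v0 ≠ d := by
        intro h
        apply hd1
        apply hone d
        have hdd : d^(2^k+1) = d := by
          rw [h] at hv0
          exact hv0
        have h1 : d^(2^k) * d = 1 * d := by
          rw [one_mul, ← pow_succ]
          exact hdd
        exact mul_right_cancel₀ hd h1
      have hW : univ.filter (fun v : L => v^(2^k+1) = d ∨ v = d) = {v0, d} := by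
        ext v
        simp only [mem_filter, mem_univ, true_and, mem_insert, mem_singleton]
        constructor
        · rintro (h | h)
          · left
            apply hq1inj
            show v^(2^k+1) = v0^(2^k+1)
            rw [h, hv0]
          · right
            exact h
        · rintro (rfl | rfl)
          · left
            exact hv0
          · right
            rfl
      rw [hW, card_pair hv0d]
    · right
      refine ⟨?_, heven⟩
      have hW : univ.filter (fun v : L => v^(2^k+1) = d ∨ v = d) = {d} := by
        ext v
        simp only [mem_filter, mem_univ, true_and, mem_singleton]
        constructor
        · rintro (h | h)
          · exfalso
            apply hno
            refine ⟨v, ?_, h⟩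
            intro hv0
            rw [hv0, zero_pow (by positivity)] at h
            exact hd h.symm
          · exact h
        · rintro rfl
          right
          rfl
      rw [hW, card_singleton]
  -- pigeonhole
  have hbadcard : ((univ.filter (fun b : L => cnt (2^k) b = 0)).filter
      (fun b => ¬ cnt (2^k) (d*b) = 0)).card
      ≤ ∑ b ∈ univ.filter (fun b : L => cnt (2^k) b = 0), cnt (2^k) (d * b) := by
    calc ((univ.filter (fun b : L => cnt (2^k) b = 0)).filter
        (fun b => ¬ cnt (2^k) (d*b) = 0)).card
        = ∑ _b ∈ (univ.filter (fun b : L => cnt (2^k) b = 0)).filter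
            (fun b => ¬ cnt (2^k) (d*b) = 0), 1 := by rw [card_eq_sum_ones]
      _ ≤ ∑ b ∈ (univ.filter (fun b : L => cnt (2^k) b = 0)).filter
            (fun b => ¬ cnt (2^k) (d*b) = 0), cnt (2^k) (d*b) := by
          apply sum_le_sum
          intro b hb
          have := (mem_filter.mp hb).2
          omega
      _ ≤ _ := sum_le_sum_of_subset (filter_subset _ _)
  have hsubsetim : ((univ.filter (fun b : L => cnt (2^k) b = 0))
        ∪ (univ.filter (fun b : L => cnt (2^k) b = 3))).image (fun b => d * b) ⊆
      (univ.filter (fun b : L => cnt (2^k) b = 0))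
        ∪ (((univ.filter (fun b : L => cnt (2^k) b = 0)).filter
            (fun b => ¬ cnt (2^k) (d*b) = 0)).image (fun b => d * b)) := by
    intro bb hbb
    obtain ⟨b, hb, rfl⟩ := mem_image.mp hbb
    rcases mem_union.mp hb with hb0 | hb3
    · by_cases h0 : cnt (2^k) (d*b) = 0
      · exact mem_union_left _ (mem_filter.mpr ⟨mem_univ _, h0⟩)
      · exact mem_union_right _ (mem_image.mpr ⟨b, mem_filter.mpr ⟨hb0, h0⟩, rfl⟩)
    · have h3 := (mem_filter.mp hb3).2
      exact mem_union_left _ (mem_filter.mpr ⟨mem_univ _, hfail b h3⟩)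
  have hinjmul : Function.Injective (fun b : L => d * b) := fun a b h =>
    mul_left_cancel₀ hd h
  have hdisj : Disjoint (univ.filter (fun b : L => cnt (2^k) b = 0))
      (univ.filter (fun b : L => cnt (2^k) b = 3)) := by
    rw [disjoint_left]
    intro b hb0 hb3
    have h0 := (mem_filter.mp hb0).2
    have h3 := (mem_filter.mp hb3).2
    omega
  have hpigeon : (univ.filter (fun b : L => cnt (2^k) b = 0)).card
      + (univ.filter (fun b : L => cnt (2^k) b = 3)).card
      ≤ (univ.filter (fun b : L => cnt (2^k) b = 0)).card
        + ∑ b ∈ univ.filter (fun b : L => cnt (2^k) b = 0), cnt (2^k) (d * b) := by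
    have himgle := card_image_le (s := (univ.filter (fun b : L => cnt (2^k) b = 0)).filter
        (fun b => ¬ cnt (2^k) (d*b) = 0)) (f := fun b => d*b)
    calc (univ.filter (fun b : L => cnt (2^k) b = 0)).card
        + (univ.filter (fun b : L => cnt (2^k) b = 3)).card
        = ((univ.filter (fun b : L => cnt (2^k) b = 0))
            ∪ (univ.filter (fun b : L => cnt (2^k) b = 3))).card :=
          (card_union_of_disjoint hdisj).symm
      _ = (((univ.filter (fun b : L => cnt (2^k) b = 0))
            ∪ (univ.filter (fun b : L => cnt (2^k) b = 3))).image (fun b => d * b)).card :=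
          (card_image_of_injective _ hinjmul).symm
      _ ≤ ((univ.filter (fun b : L => cnt (2^k) b = 0))
            ∪ (((univ.filter (fun b : L => cnt (2^k) b = 0)).filter
              (fun b => ¬ cnt (2^k) (d*b) = 0)).image (fun b => d * b))).card :=
          card_le_card hsubsetim
      _ ≤ _ := by
          have := card_union_le (univ.filter (fun b : L => cnt (2^k) b = 0))
            (((univ.filter (fun b : L => cnt (2^k) b = 0)).filter
              (fun b => ¬ cnt (2^k) (d*b) = 0)).image (fun b => d * b))
          omega
  -- final contradiction
  rcases hWcard with ⟨hodd, hW2⟩ | ⟨hW1, heven⟩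
  · have h32 : 32 ≤ 2^l := by
      have hl5 : 5 ≤ l := by
        rcases hodd with ⟨m, hm⟩
        omega
      calc (32:ℕ) = 2^5 := by norm_num
        _ ≤ 2^l := Nat.pow_le_pow_right (by norm_num) hl5
    omega
  · omega
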